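/- Let ⋈ be an equivalence relation on ℤ/nℤ satisfying the balanced condition for the nearest-neighbor ring. If c ⋈ d with c−1 ⋈ d−1 and c+1 ⋈ d+1, and m = d − c ≠ 0, then c + j ⋈ c + j + m for all j ∈ ℤ; consequently ⋈ is invariant under the rotation by m, and m generates a subgroup whose orbits refine the ⋈-classes. -/

import Mathlib

/-- If `c ⋈ d` with `c - 1 ⋈ d - 1` and `c + 1 ⋈ d + 1` in a balanced relation on the
ring `ℤ/nℤ`, and `m = d - c ≠ 0`, then `c + j ⋈ c + j + m` for all `j ∈ ℤ`; consequently
`⋈` is invariant under rotation by `m` and the orbits of the rotation by `m` refine the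
`⋈`-classes. -/
theorem stmt_17 (n : ℕ) (hn : 3 ≤ n) (r : ZMod n → ZMod n → Prop)
    (hequiv : Equivalence r)
    (hbal : ∀ c d : ZMod n, r c d →
      (r (c - 1) (d - 1) ∧ r (c + 1) (d + 1)) ∨
        (r (c - 1) (d + 1) ∧ r (c + 1) (d - 1)))
    (c d : ZMod n) (hcd : r c d)
    (hm1 : r (c - 1) (d - 1)) (hp1 : r (c + 1) (d + 1))
    (m : ZMod n) (hmdef : m = d - c) (hm0 : m ≠ 0) :
    (∀ j : ℤ, r (c + (j : ZMod n)) (c + (j : ZMod n) + m)) ∧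
      (∀ a b : ZMod n, r a b → r (a + m) (b + m)) ∧
      (∀ (a : ZMod n) (z : ℤ), r a (a + z • m)) := by
  obtain ⟨hrefl, hsymm, htrans⟩ := hequiv
  have step : ∀ a b : ZMod n, r a b → r (a + 1) (b + 1) → r (a + 2) (b + 2) := by
    intro a b hab h1
    rcases hbal _ _ h1 with ⟨_, h⟩ | ⟨ha, hb⟩
    · have e1 : a + 1 + 1 = a + 2 := by ring
      have e2 : b + 1 + 1 = b + 2 := by ring
      rwa [e1, e2] at h
    · have e1 : a + 1 - 1 = a := by ring
      have e2 : b + 1 + 1 = b + 2 := by ring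
      have e3 : a + 1 + 1 = a + 2 := by ring
      have e4 : b + 1 - 1 = b := by ring
      rw [e1, e2] at ha
      rw [e3, e4] at hb
      exact htrans hb (htrans (hsymm hab) ha)
  have key : ∀ k : ℕ, r (c + (k : ZMod n)) (d + (k : ZMod n)) ∧
      r (c + (k : ZMod n) + 1) (d + (k : ZMod n) + 1) := by
    intro k
    induction k with
    | zero => simpa using ⟨hcd, hp1⟩
    | succ k ih =>
      obtain ⟨h1, h2⟩ := ih
      have hcast : ((k + 1 : ℕ) : ZMod n) = (k : ZMod n) + 1 := by push_cast; ring
      constructor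
      · rw [hcast, ← add_assoc, ← add_assoc]; exact h2
      · have := step _ _ h1 h2
        rw [hcast]
        have e1 : c + ((k : ZMod n) + 1) + 1 = c + (k : ZMod n) + 2 := by ring
        have e2 : d + ((k : ZMod n) + 1) + 1 = d + (k : ZMod n) + 2 := by ring
        rwa [e1, e2]
  have univ : ∀ a : ZMod n, r a (a + m) := by
    intro a
    have : NeZero n := ⟨by omega⟩
    obtain ⟨k, hk⟩ := ZMod.natCast_zmod_surjective (a - c)
    have ha : a = c + (k : ZMod n) := by rw [hk]; ring
    have : a + m = d + (k : ZMod n) := by rw [ha, hmdef]; ring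
    rw [this, ha]
    exact (key k).1
  refine ⟨fun j => univ _, fun a b hab => ?_, fun a z => ?_⟩
  · exact htrans (hsymm (univ a)) (htrans hab (univ b))
  · induction z using Int.induction_on with
    | zero => simpa using hrefl a
    | succ k ih =>
      have e : ((k : ℤ) + 1) • m = (k : ℤ) • m + m := by rw [add_smul, one_smul]
      rw [e, ← add_assoc]
      exact htrans ih (univ _)
    | pred k ih =>
      have e : (-(k : ℤ) - 1) • m + m = (-(k : ℤ)) • m := by
        rw [sub_smul, one_smul]; ring
      have := univ (a + (-(k : ℤ) - 1) • m)
      rw [add_assoc, e] at this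
      exact htrans ih (hsymm this)
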